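/- arXiv:2204.00733 — 3 statements merged into one kernel-verified Lean document; each statement's English description precedes it below -/
import Mathlib

section
/- With A, B as above satisfying A = −σ₃Bσ₃, the matrix-valued function H(z) = I + A/(z − √(2/3)) + B/(z + √(2/3)) satisfies det H(z) = 1 identically (for z ≠ ±√(2/3)). -/
set_option maxHeartbeats 1000000


open Complex Matrix

lemma sc (r2 r23 c z w v : ℂ) (h2 : r2^2 = 2) (h23 : r23^2 = 2/3)
    (hd1 : c + r2 ≠ 0) (hd1'' : r2 + c ≠ 0) (hd2 : r2 - c ≠ 0) (hd1' : c - r2 ≠ 0)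
    (hz1 : z - r23 ≠ 0) (hz2 : z + r23 ≠ 0)
    (hw : w ≠ 0) (hv : w * v = 1) :
    (1 + (z - r23)⁻¹ * (r23 * (c / (c + r2))) + (z + r23)⁻¹ * (r23 * (-(c / (c + r2)))))
    * (1 + (z - r23)⁻¹ * (r23 * (c / (c - r2))) + (z + r23)⁻¹ * (r23 * (-(c / (c - r2)))))
    - ((z - r23)⁻¹ * (r23 * (-(v * c) / (r2 + c))) + (z + r23)⁻¹ * (r23 * (-(v * c) / (r2 + c))))
    * ((z - r23)⁻¹ * (r23 * (w * c / (r2 - c))) + (z + r23)⁻¹ * (r23 * (w * c / (r2 - c)))) = 1 := by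
  have hcne : c^2 - 2 ≠ 0 := by
    have := mul_ne_zero hd1 hd1'
    rwa [show (c + r2) * (c - r2) = c^2 - 2 by linear_combination -h2] at this
  have hz3 : 3*z^2 - 2 ≠ 0 := by
    have h := mul_ne_zero (mul_ne_zero hz1 hz2) (three_ne_zero (α := ℂ))
    rwa [show (z - r23) * (z + r23) * 3 = 3*z^2 - 2 by linear_combination -(3:ℂ)*h23] at h
  have f1 : (z - r23)⁻¹ - (z + r23)⁻¹ = 6*r23/(3*z^2 - 2) := by
    rw [inv_sub_inv hz1 hz2, div_eq_div_iff (mul_ne_zero hz1 hz2) hz3]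
    linear_combination 6*r23*h23
  have f2 : (z - r23)⁻¹ + (z + r23)⁻¹ = 6*z/(3*z^2 - 2) := by
    rw [inv_add_inv hz1 hz2, div_eq_div_iff (mul_ne_zero hz1 hz2) hz3]
    linear_combination 6*z*h23
  have f3 : r23 * (c / (c + r2)) + r23 * (c / (c - r2)) = 2*r23*c^2/(c^2 - 2) := by
    field_simp
    linear_combination (norm := ring_nf) 2*r23*c^2*h2
  have f4 : (r23 * (c / (c + r2))) * (r23 * (c / (c - r2))) = 2*c^2/3/(c^2 - 2) := by
    field_simp
    linear_combination (norm := ring_nf) 3*c^2*(c^2-2)*h23 + 2*c^2*h2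
  have f5 : (r23 * (-(v * c) / (r2 + c))) * (r23 * (w * c / (r2 - c))) = 2*c^2/3/(c^2 - 2) := by
    field_simp
    linear_combination (norm := ring_nf) -3*c^2*(c^2-2)*w*v*h23 - 2*c^2*(c^2-2)*hv - 2*c^2*h2
  have e1 : (1 + (z - r23)⁻¹ * (r23 * (c / (c + r2))) + (z + r23)⁻¹ * (r23 * (-(c / (c + r2)))))
    * (1 + (z - r23)⁻¹ * (r23 * (c / (c - r2))) + (z + r23)⁻¹ * (r23 * (-(c / (c - r2)))))
    - ((z - r23)⁻¹ * (r23 * (-(v * c) / (r2 + c))) + (z + r23)⁻¹ * (r23 * (-(v * c) / (r2 + c))))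
    * ((z - r23)⁻¹ * (r23 * (w * c / (r2 - c))) + (z + r23)⁻¹ * (r23 * (w * c / (r2 - c))))
    = 1 + ((z - r23)⁻¹ - (z + r23)⁻¹) * (r23 * (c / (c + r2)) + r23 * (c / (c - r2)))
      + ((z - r23)⁻¹ - (z + r23)⁻¹)^2 * ((r23 * (c / (c + r2))) * (r23 * (c / (c - r2))))
      - ((z - r23)⁻¹ + (z + r23)⁻¹)^2 * ((r23 * (-(v * c) / (r2 + c))) * (r23 * (w * c / (r2 - c)))) := by
    ring
  have hA : (3*z^2 - 2) * (3*z^2 - 2)⁻¹ = 1 := mul_inv_cancel₀ hz3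
  rw [e1, f1, f2, f3, f4, f5]
  linear_combination (12*c^2*(3*z^2-2)⁻¹*(c^2-2)⁻¹ + 24*c^2*((3*z^2-2)⁻¹)^2*(c^2-2)⁻¹) * h23
    - 8*c^2*(3*z^2-2)⁻¹*(c^2-2)⁻¹ * hA


theorem stmt_8 (c s0 Dinf : ℂ) (hs0 : s0 ≠ 0) (hD : Dinf ≠ 0)
    (hc1 : c ≠ (Real.sqrt 2 : ℂ)) (hc2 : c ≠ -(Real.sqrt 2 : ℂ))
    (A B : Matrix (Fin 2) (Fin 2) ℂ)
    (hA : A = (Real.sqrt (2/3) : ℂ) •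
      !![c / (c + (Real.sqrt 2 : ℂ)),
         -Complex.exp (-(Real.pi : ℂ) * Complex.I / 6) * c * s0⁻¹ * (Dinf^2)⁻¹ /
           ((Real.sqrt 2 : ℂ) + c);
         Complex.exp ((Real.pi : ℂ) * Complex.I / 6) * c * s0 * Dinf^2 /
           ((Real.sqrt 2 : ℂ) - c),
         c / (c - (Real.sqrt 2 : ℂ))])
    (hB : B = (Real.sqrt (2/3) : ℂ) •
      !![-(c / (c + (Real.sqrt 2 : ℂ))),
         -Complex.exp (-(Real.pi : ℂ) * Complex.I / 6) * c * s0⁻¹ * (Dinf^2)⁻¹ /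
           ((Real.sqrt 2 : ℂ) + c);
         Complex.exp ((Real.pi : ℂ) * Complex.I / 6) * c * s0 * Dinf^2 /
           ((Real.sqrt 2 : ℂ) - c),
         -(c / (c - (Real.sqrt 2 : ℂ)))])
    (z : ℂ) (hz1 : z ≠ (Real.sqrt (2/3) : ℂ)) (hz2 : z ≠ -(Real.sqrt (2/3) : ℂ)) :
    Matrix.det (1 + (z - (Real.sqrt (2/3) : ℂ))⁻¹ • A + (z + (Real.sqrt (2/3) : ℂ))⁻¹ • B)
      = 1 := by
  
  subst hA hB
  set r2 : ℂ := (Real.sqrt 2 : ℂ) with hr2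
  set r23 : ℂ := (Real.sqrt (2/3) : ℂ) with hr23
  have h2 : r2^2 = 2 := by
    rw [hr2]; norm_cast; rw [Real.sq_sqrt]; norm_num
  have h23 : r23^2 = 2/3 := by
    rw [hr23]; norm_cast; rw [Real.sq_sqrt] <;> norm_num
  have hd1 : c + r2 ≠ 0 := fun h => hc2 (by linear_combination h)
  have hd1' : c - r2 ≠ 0 := sub_ne_zero.mpr hc1
  have hd1'' : r2 + c ≠ 0 := fun h => hd1 (by linear_combination h)
  have hd2 : r2 - c ≠ 0 := fun h => hd1' (by linear_combination -h)
  have hz1' : z - r23 ≠ 0 := sub_ne_zero.mpr hz1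
  have hz2' : z + r23 ≠ 0 := fun h => hz2 (by linear_combination h)
  set w : ℂ := Complex.exp ((Real.pi : ℂ) * Complex.I / 6) * s0 * Dinf^2 with hwdef
  set v : ℂ := Complex.exp (-(Real.pi : ℂ) * Complex.I / 6) * s0⁻¹ * (Dinf^2)⁻¹ with hvdef
  have hw : w ≠ 0 := by
    apply mul_ne_zero (mul_ne_zero (Complex.exp_ne_zero _) hs0) (pow_ne_zero _ hD)
  have hv : w * v = 1 := by
    have he : Complex.exp ((Real.pi : ℂ) * Complex.I / 6) *
        Complex.exp (-(Real.pi : ℂ) * Complex.I / 6) = 1 := by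
      rw [← Complex.exp_add,
        show ((Real.pi : ℂ) * Complex.I / 6 + -(Real.pi : ℂ) * Complex.I / 6) = 0 by ring,
        Complex.exp_zero]
    have hwv : w * v = (Complex.exp ((Real.pi : ℂ) * Complex.I / 6) *
        Complex.exp (-(Real.pi : ℂ) * Complex.I / 6)) * ((s0 * s0⁻¹) * (Dinf^2 * (Dinf^2)⁻¹)) := by
      rw [hwdef, hvdef]; ring
    rw [hwv, he, mul_inv_cancel₀ hs0, mul_inv_cancel₀ (pow_ne_zero 2 hD)]
    norm_num
  rw [Matrix.det_fin_two]
  simp only [Matrix.add_apply, Matrix.smul_apply, Matrix.one_apply,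
    Matrix.cons_val', Matrix.cons_val_zero, Matrix.cons_val_one, Matrix.head_cons,
    Matrix.empty_val', Matrix.cons_val_fin_one, Matrix.head_fin_const, smul_eq_mul,
    if_true, one_ne_zero, if_false, Fin.zero_eta, Fin.mk_one, ne_eq,
    zero_ne_one, Fin.one_eq_zero_iff]
  norm_num
  have hsc := sc r2 r23 c z w v h2 h23 hd1 hd1'' hd2 hd1' hz1' hz2' hw hv
  ring_nf at hsc ⊢
  simp only [show ((Real.pi : ℂ) * I * (-1 / 6) : ℂ) = -(Real.pi : ℂ) * I / 6 by ring,
    show ((Real.pi : ℂ) * I * (1 / 6) : ℂ) = (Real.pi : ℂ) * I / 6 by ring] at hsc ⊢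
  linear_combination hsc
end

section
/- Let α ∈ ℝ with α − 1/2 ∉ ℤ, κ* = 1/(√π Γ(α + 1/2)), and define ρ(κ) = 1 − 2π^{3/2} κ /(e^{πiα} Γ(1/2 − α)) for κ ∈ ℝ. Then |ρ(κ)| > 1 if and only if κ(κ − κ*) > 0. -/
open Complex

theorem stmt_14 (α : ℝ) (hα : ∀ n : ℤ, α - 1/2 ≠ (n : ℝ)) (κ : ℝ)
    (κstar : ℝ) (hκstar : κstar = 1 / (Real.sqrt Real.pi * Real.Gamma (α + 1/2)))
    (ρ : ℂ)
    (hρ : ρ = 1 - ((2 * Real.pi * Real.sqrt Real.pi * κ : ℝ) : ℂ) /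
      (Complex.exp ((Real.pi : ℂ) * Complex.I * (α : ℂ)) *
        Complex.Gamma ((1 : ℂ)/2 - (α : ℂ)))) :
    1 < ‖ρ‖ ↔ κ * (κ - κstar) > 0 := by
  have hπ : (0:ℝ) < Real.pi := Real.pi_pos
  have hs : (0:ℝ) < Real.sqrt Real.pi := Real.sqrt_pos.2 hπ
  have hss : Real.sqrt Real.pi * Real.sqrt Real.pi = Real.pi :=
    Real.mul_self_sqrt hπ.le
  set g : ℝ := Real.Gamma (1/2 - α) with hg
  set g' : ℝ := Real.Gamma (α + 1/2) with hg'
  have hgne : g ≠ 0 := by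
    apply Real.Gamma_ne_zero
    intro m h
    exact hα m (by push_cast; linarith)
  have hg'ne : g' ≠ 0 := by
    apply Real.Gamma_ne_zero
    intro m h
    exact hα (-(m:ℤ) - 1) (by push_cast; linarith)
  set θ : ℝ := Real.pi * α with hθ
  -- reflection formula
  have hrefl : g * g' * Real.cos θ = Real.pi := by
    have h0 := Real.Gamma_mul_Gamma_one_sub (1/2 - α)
    have h1 : (1 : ℝ) - (1/2 - α) = α + 1/2 := by ring
    rw [h1] at h0
    have h2 : Real.sin (Real.pi * (1/2 - α)) = Real.cos θ := by
      rw [show Real.pi * (1/2 - α) = Real.pi / 2 - θ by rw [hθ]; ring,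
        Real.sin_pi_div_two_sub]
    rw [h2] at h0
    have hcosne : Real.cos θ ≠ 0 := by
      intro hc
      rw [hc, div_zero] at h0
      exact mul_ne_zero hgne hg'ne h0
    rw [eq_div_iff hcosne] at h0
    linarith [h0]
  set r : ℝ := 2 * Real.pi * Real.sqrt Real.pi * κ / g with hr
  have hgc : (g : ℂ) ≠ 0 := Complex.ofReal_ne_zero.mpr hgne
  have hρ' : ρ = 1 - (r : ℂ) * (((Real.cos θ : ℝ) : ℂ) - ((Real.sin θ : ℝ) : ℂ) * I) := by
    rw [hρ]
    have hGc : Complex.Gamma ((1 : ℂ)/2 - (α : ℂ)) = (g : ℂ) := by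
      rw [hg, show ((1:ℂ)/2 - (α:ℂ)) = ((1/2 - α : ℝ) : ℂ) by push_cast; ring]
      exact Complex.Gamma_ofReal _
    have hexp : Complex.exp ((Real.pi : ℂ) * Complex.I * (α : ℂ)) =
        Complex.exp ((θ : ℝ) * Complex.I) := by
      rw [hθ]; push_cast; ring_nf
    rw [hGc, hexp]
    have hdiv : ((2 * Real.pi * Real.sqrt Real.pi * κ : ℝ) : ℂ) /
        (Complex.exp ((θ : ℝ) * Complex.I) * (g : ℂ)) =
        (r : ℂ) * Complex.exp (((-θ : ℝ) : ℂ) * Complex.I) := by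
      rw [div_eq_iff (mul_ne_zero (Complex.exp_ne_zero _) hgc)]
      have hee : Complex.exp (((-θ : ℝ) : ℂ) * Complex.I) *
          Complex.exp (((θ : ℝ) : ℂ) * Complex.I) = 1 := by
        rw [← Complex.exp_add,
          show ((-θ : ℝ) : ℂ) * Complex.I + ((θ : ℝ) : ℂ) * Complex.I = 0 by push_cast; ring,
          Complex.exp_zero]
      have hrg : (r : ℂ) * (g : ℂ) = ((2 * Real.pi * Real.sqrt Real.pi * κ : ℝ) : ℂ) := by
        rw [hr]; push_cast; field_simp
      calc ((2 * Real.pi * Real.sqrt Real.pi * κ : ℝ) : ℂ)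
          = (r : ℂ) * (g : ℂ) * 1 := by rw [hrg, mul_one]
        _ = (r : ℂ) * Complex.exp (((-θ : ℝ) : ℂ) * Complex.I) *
            (Complex.exp (((θ : ℝ) : ℂ) * Complex.I) * (g : ℂ)) := by
            rw [← hee]; ring
    rw [hdiv, Complex.exp_mul_I]
    rw [← Complex.ofReal_cos, ← Complex.ofReal_sin, Real.cos_neg, Real.sin_neg]
    push_cast
    ring
  have habs : (‖ρ‖)^2 = 1 + r * (r - 2 * Real.cos θ) := by
    rw [Complex.sq_norm, hρ', Complex.normSq_apply]
    simp only [Complex.sub_re, Complex.sub_im, Complex.one_re, Complex.one_im,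
      Complex.mul_re, Complex.mul_im, Complex.ofReal_re, Complex.ofReal_im,
      Complex.I_re, Complex.I_im]
    have hsc := Real.sin_sq_add_cos_sq θ
    ring_nf
    linear_combination (r ^ 2) * hsc
  have hcos : Real.cos θ = Real.pi / (g * g') := by
    rw [eq_div_iff (mul_ne_zero hgne hg'ne)]
    linarith [hrefl]
  have hkey : r * (r - 2 * Real.cos θ) =
      (2 * Real.pi * Real.sqrt Real.pi / g)^2 * (κ * (κ - κstar)) := by
    rw [hr, hcos, hκstar]
    field_simp
  have hposfac : (0:ℝ) < (2 * Real.pi * Real.sqrt Real.pi / g)^2 :=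
    pow_two_pos_of_ne_zero (div_ne_zero (by positivity) hgne)
  have h2 : 1 < ‖ρ‖ ↔ 1 < (‖ρ‖)^2 := by
    constructor <;> intro h <;> nlinarith [norm_nonneg ρ]
  rw [h2, habs, hkey]
  constructor
  · intro h; nlinarith
  · intro h; nlinarith [mul_pos hposfac h]
end

section
/- Fix real constants b and ψ and define ϑ(x) = x²/√3 − b·ln(2√3 x²) + ψ for x < 0. If (a_n) is a sequence of negative reals with ϑ(a_n) = 2nπ + 2π/3 + O(1/n) as n → ∞, then a_n = −√(2π)·3^{1/4}·[√n + b ln n/(4π√n) + (b ln(12π) − ψ + 2π/3)/(4π√n) + O(ln²n / n^{3/2})]. -/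
set_option maxHeartbeats 4000000

open Filter Real

noncomputable def theta (b ψ x : ℝ) : ℝ :=
  x ^ 2 / Real.sqrt 3 - b * Real.log (2 * Real.sqrt 3 * x ^ 2) + ψ

private lemma hl1 (x : ℝ) (hx : 0 < x) : Real.log x ≤ 2 * Real.sqrt x := by
  have h1 : Real.log (Real.sqrt x) ≤ Real.sqrt x - 1 :=
    Real.log_le_sub_one_of_pos (Real.sqrt_pos.mpr hx)
  rw [Real.log_sqrt hx.le] at h1
  linarith

private lemma hl2 (r : ℝ) (hr : 1/2 ≤ r) : |Real.log r| ≤ 2 * |r - 1| := by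
  rcases le_or_gt 1 r with h | h
  · have h1 : Real.log r ≤ r - 1 := Real.log_le_sub_one_of_pos (by linarith)
    have h2 : 0 ≤ Real.log r := Real.log_nonneg h
    rw [abs_of_nonneg h2, abs_of_nonneg (by linarith)]
    linarith
  · have hrpos : 0 < r := by linarith
    have h1 : Real.log r⁻¹ ≤ r⁻¹ - 1 := Real.log_le_sub_one_of_pos (by positivity)
    rw [Real.log_inv] at h1
    have h2 : Real.log r ≤ 0 := Real.log_nonpos (by linarith) h.le
    rw [abs_of_nonpos h2, abs_of_nonpos (by linarith)]
    have h3 : r⁻¹ - 1 = (1 - r) / r := by field_simp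
    rw [h3] at h1
    have h4 : (1 - r) / r ≤ 2 * (1 - r) := by
      rw [div_le_iff₀ hrpos]; nlinarith
    linarith

private lemma hl3 (s : ℝ) (hs : |s| ≤ 1/2) : |Real.sqrt (1 + s) - (1 + s/2)| ≤ s^2 := by
  have h0 : (0:ℝ) ≤ 1 + s := by cases abs_le.mp hs; linarith
  set y := Real.sqrt (1+s) with hy
  have hy2 : y^2 = 1 + s := Real.sq_sqrt h0
  have hy0 : 0 ≤ y := Real.sqrt_nonneg _
  have hs' := abs_le.mp hs
  rw [abs_le]
  constructor <;> nlinarith [sq_nonneg (y - 1 - s/2), sq_nonneg (y + 1 + s/2), sq_nonneg s]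

private lemma hl4 (ε : ℝ) (hε : 0 < ε) : ∀ᶠ n : ℕ in atTop, Real.log n ≤ ε * n := by
  have hev := tendsto_natCast_atTop_atTop (R := ℝ) |>.eventually_ge_atTop ((2/ε)^2)
  filter_upwards [hev] with n hn
  have hn0 : (0:ℝ) ≤ n := le_trans (by positivity) hn
  have h1 : Real.log n ≤ 2 * Real.sqrt n := by
    rcases eq_or_lt_of_le hn0 with h | h
    · simp [← h]
    · exact hl1 _ h
  have h2 : 2/ε ≤ Real.sqrt n := by
    have := Real.sqrt_le_sqrt hn
    rwa [Real.sqrt_sq (by positivity)] at this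
  have h3 : Real.sqrt n * Real.sqrt n = n := Real.mul_self_sqrt hn0
  have h4 : ε * (2/ε) ≤ ε * Real.sqrt n := mul_le_mul_of_nonneg_left h2 hε.le
  have h5 : ε * (2/ε) = 2 := by field_simp
  nlinarith [Real.sqrt_nonneg (n:ℝ), mul_le_mul_of_nonneg_right (h5 ▸ h4 : (2:ℝ) ≤ ε * Real.sqrt n) (Real.sqrt_nonneg (n:ℝ))]

theorem stmt_16 (b ψ : ℝ) (a : ℕ → ℝ)
    (hneg : ∀ n, a n < 0)
    (hinf : Tendsto a atTop atBot)
    (hasy : (fun n : ℕ => theta b ψ (a n) - (2 * n * Real.pi + 2 * Real.pi / 3))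
      =O[atTop] fun n : ℕ => 1 / (n : ℝ)) :
    (fun n : ℕ => a n -
      (-(Real.sqrt (2 * Real.pi) * (3 : ℝ) ^ ((1 : ℝ)/4)) *
        (Real.sqrt n + b * Real.log n / (4 * Real.pi * Real.sqrt n) +
          (b * Real.log (12 * Real.pi) - ψ + 2 * Real.pi / 3) /
            (4 * Real.pi * Real.sqrt n))))
      =O[atTop] fun n : ℕ => (Real.log n) ^ 2 / (n : ℝ) ^ ((3 : ℝ)/2) := by
  rw [Asymptotics.isBigO_iff] at hasy
  obtain ⟨c, hc⟩ := hasy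
  have hπ : (0:ℝ) < π := Real.pi_pos
  obtain ⟨q, hqdef⟩ : ∃ x : ℝ, x = Real.sqrt 3 := ⟨_, rfl⟩
  have hq0 : (0:ℝ) < q := hqdef ▸ Real.sqrt_pos.mpr (by norm_num)
  have hq2 : q ^ 2 = 3 := hqdef ▸ Real.sq_sqrt (by norm_num)
  have hq1 : (1:ℝ) ≤ q := by nlinarith
  obtain ⟨K, hKdef⟩ : ∃ x : ℝ, x = 2 * q * π := ⟨_, rfl⟩
  have hK0 : (0:ℝ) < K := by rw [hKdef]; positivity
  obtain ⟨t, htdef⟩ : ∃ f : ℕ → ℝ, f = fun n => (a n) ^ 2 := ⟨_, rfl⟩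
  have htpos : ∀ n, 0 < t n := fun n => by
    have h := mul_pos_of_neg_of_neg (hneg n) (hneg n)
    simp only [htdef]; nlinarith
  obtain ⟨L, hLdef⟩ : ∃ f : ℕ → ℝ, f = fun n => Real.log (2 * q * t n) := ⟨_, rfl⟩
  obtain ⟨E, hEdef⟩ : ∃ f : ℕ → ℝ, f = fun n => theta b ψ (a n) - (2 * n * π + 2 * π / 3) :=
    ⟨_, rfl⟩
  have key : ∀ n : ℕ, t n = K * n + q * (2*π/3 - ψ) + q * b * L n + q * E n := by
    intro n
    rw [hEdef, hLdef, hKdef, htdef]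
    simp only [theta, ← hqdef]
    field_simp
    ring
  have hc0 : 0 ≤ c := by
    obtain ⟨n, hn1, hn2⟩ := (hc.and (eventually_ge_atTop 1)).exists
    have hn0 : (0:ℝ) < n := by exact_mod_cast hn2
    have hle : (0:ℝ) ≤ c * ‖1/(n:ℝ)‖ := le_trans (norm_nonneg _) hn1
    have h2 : ‖1/(n:ℝ)‖ = 1/(n:ℝ) := by
      rw [Real.norm_eq_abs, abs_of_pos (by positivity)]
    rw [h2] at hle
    by_contra h
    push_neg at h
    have : c * (1/(n:ℝ)) < 0 := mul_neg_of_neg_of_pos h (by positivity)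
    linarith
  have hcE : ∀ᶠ n : ℕ in atTop, |E n| ≤ c / n := by
    filter_upwards [hc, eventually_ge_atTop 1] with n h1 h2
    have hn0 : (0:ℝ) < n := by exact_mod_cast h2
    have h3 : ‖1/(n:ℝ)‖ = 1/(n:ℝ) := by
      rw [Real.norm_eq_abs, abs_of_pos (by positivity)]
    rw [h3] at h1
    simp only [hEdef]
    calc |theta b ψ (a n) - (2 * n * π + 2 * π / 3)| ≤ c * (1/(n:ℝ)) := h1
    _ = c / n := by ring
  have ht_top : Tendsto t atTop atTop := by
    have h1 : Tendsto (fun n => -(a n)) atTop atTop :=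
      tendsto_neg_atBot_atTop.comp hinf
    have h2 := h1.atTop_mul_atTop₀ h1
    refine h2.congr fun n => by simp [htdef]; ring
  obtain ⟨C1, hC1def⟩ : ∃ x : ℝ, x = q * |2*π/3 - ψ| + q * c := ⟨_, rfl⟩
  have hC1pos : 0 ≤ C1 := by rw [hC1def]; positivity
  have hM : ∀ᶠ n : ℕ in atTop, (max 1 ((4*q*((abs b)+1)*Real.sqrt (2*q))^2)) ≤ t n :=
    ht_top.eventually_ge_atTop _
  have hKn : ∀ᶠ n : ℕ in atTop, 4*C1 + 4 ≤ K * n := by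
    have h := tendsto_natCast_atTop_atTop (R := ℝ) |>.eventually_ge_atTop ((4*C1+4)/K)
    filter_upwards [h] with n hn
    rw [div_le_iff₀ hK0] at hn
    linarith
  have S1 : ∀ᶠ n : ℕ in atTop, K*n/2 ≤ t n ∧ t n ≤ 3*(K*n) := by
    filter_upwards [hM, hcE, hKn, eventually_ge_atTop 1] with n hMn hEn hKnn hn1
    have hn0 : (1:ℝ) ≤ n := by exact_mod_cast hn1
    have htn1 : (1:ℝ) ≤ t n := le_trans (le_max_left _ _) hMn
    have hL0 : 0 ≤ L n := by
      simp only [hLdef]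
      refine Real.log_nonneg ?_
      have h := mul_le_mul hq1 htn1 zero_le_one hq0.le
      linarith
    have hLle : L n ≤ 2 * (Real.sqrt (2*q) * Real.sqrt (t n)) := by
      have h := hl1 (2*q*t n) (by positivity)
      rw [show (2*q*t n) = (2*q)*(t n) by ring, Real.sqrt_mul (by positivity)] at h
      simp only [hLdef]
      exact h
    have hst : 4*q*((abs b)+1)*Real.sqrt (2*q) ≤ Real.sqrt (t n) := by
      have h1 := le_trans (le_max_right _ _) hMn
      have h2 := Real.sqrt_le_sqrt h1
      rwa [Real.sqrt_sq (by positivity)] at h2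
    have hsq : Real.sqrt (t n) ^ 2 = t n := Real.sq_sqrt (htpos n).le
    have habs : |q * b * L n| ≤ 2*q*((abs b)+1)*Real.sqrt (2*q) * Real.sqrt (t n) := by
      rw [abs_mul, abs_mul, abs_of_pos hq0, abs_of_nonneg hL0]
      have h : q * (abs b) * L n ≤ q * (abs b) * (2*(Real.sqrt (2*q)*Real.sqrt (t n))) :=
        mul_le_mul_of_nonneg_left hLle (by positivity)
      have hnn : 0 ≤ 2*q*Real.sqrt (2*q)*Real.sqrt (t n) := by positivity
      linarith
    have hqbt : |q*b*L n| ≤ t n / 2 := by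
      have h2 : 2*q*((abs b)+1)*Real.sqrt (2*q) * Real.sqrt (t n)
          ≤ (Real.sqrt (t n)/2) * Real.sqrt (t n) := by
        apply mul_le_mul_of_nonneg_right _ (Real.sqrt_nonneg _)
        linarith
      calc |q*b*L n| ≤ 2*q*((abs b)+1)*Real.sqrt (2*q) * Real.sqrt (t n) := habs
        _ ≤ (Real.sqrt (t n)/2)*Real.sqrt (t n) := h2
        _ = t n / 2 := by linear_combination (1/2)*hsq
    have hEb : |q * E n| ≤ q * c := by
      rw [abs_mul, abs_of_pos hq0]
      have h : |E n| ≤ c := le_trans hEn (div_le_self hc0 hn0)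
      exact mul_le_mul_of_nonneg_left h hq0.le
    have hkey := key n
    have h4 : |q*(2*π/3 - ψ)| = q*|2*π/3 - ψ| := by rw [abs_mul, abs_of_pos hq0]
    obtain ⟨h5a, h5b⟩ := abs_le.mp hqbt
    obtain ⟨h6a, h6b⟩ := abs_le.mp hEb
    have h7 := le_abs_self (q*(2*π/3 - ψ))
    have h8 := neg_abs_le (q*(2*π/3 - ψ))
    rw [h4] at h7 h8
    constructor <;> linarith
  obtain ⟨C2, hC2def⟩ : ∃ x : ℝ, x = |Real.log (q*K)| + |Real.log (6*(q*K))| := ⟨_, rfl⟩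
  have hC2pos : 0 ≤ C2 := by rw [hC2def]; positivity
  obtain ⟨C4, hC4def⟩ : ∃ x : ℝ, x = q*(|2*π/3 - ψ| + c + (abs b)*(1+C2)) + 1 := ⟨_, rfl⟩
  have hC4pos : (0:ℝ) < C4 := by
    rw [hC4def]
    have : 0 ≤ q*(|2*π/3 - ψ| + c + (abs b)*(1+C2)) := by positivity
    linarith
  have S2 : ∀ᶠ n : ℕ in atTop, |t n - K*n| ≤ C4 * Real.log n := by
    filter_upwards [S1, hcE, eventually_ge_atTop 3] with n hS1 hEn hn3
    have hn0 : (3:ℝ) ≤ n := by exact_mod_cast hn3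
    have hn1 : (1:ℝ) ≤ n := by linarith
    have hnpos : (0:ℝ) < n := by linarith
    have hlog1 : 1 ≤ Real.log n := by
      rw [Real.le_log_iff_exp_le hnpos]
      have h := Real.exp_one_lt_d9
      linarith
    have hqK : (0:ℝ) < q*K := by positivity
    have hub : L n ≤ Real.log (6*(q*K)) + Real.log n := by
      have h1 : 2*q*t n ≤ (6*(q*K))*n := by
        have h := mul_le_mul_of_nonneg_left hS1.2 (by positivity : (0:ℝ) ≤ 2*q)
        linarith
      have h2 : L n ≤ Real.log ((6*(q*K))*n) := by
        simp only [hLdef]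
        exact Real.log_le_log (by have := htpos n; positivity) h1
      rwa [Real.log_mul (by positivity) (by positivity)] at h2
    have hlb : Real.log (q*K) + Real.log n ≤ L n := by
      have h1 : (q*K)*n ≤ 2*q*t n := by
        have h := mul_le_mul_of_nonneg_left hS1.1 (by positivity : (0:ℝ) ≤ 2*q)
        linarith
      have h2 : Real.log ((q*K)*n) ≤ L n := by
        simp only [hLdef]
        exact Real.log_le_log (by have := htpos n; positivity) h1
      rwa [Real.log_mul (by positivity) (by positivity)] at h2
    have hlogn0 : 0 ≤ Real.log n := by linarith
    have hLabs : |L n| ≤ Real.log n + C2 := by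
      rw [abs_le, hC2def]
      constructor
      · have := neg_abs_le (Real.log (q*K))
        have := abs_nonneg (Real.log (6*(q*K)))
        linarith
      · have := le_abs_self (Real.log (6*(q*K)))
        have := abs_nonneg (Real.log (q*K))
        linarith
    have hkey := key n
    have htri : |t n - K*n| ≤ q*|2*π/3 - ψ| + q*(abs b)*|L n| + q*c := by
      have h1 : t n - K*n = q*(2*π/3 - ψ) + q*b*L n + q*E n := by linarith
      rw [h1]
      have h2 := abs_add_le (q*(2*π/3 - ψ) + q*b*L n) (q*E n)
      have h3 := abs_add_le (q*(2*π/3 - ψ)) (q*b*L n)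
      have h4 : |q*(2*π/3 - ψ)| = q*|2*π/3 - ψ| := by rw [abs_mul, abs_of_pos hq0]
      have h5 : |q*b*L n| = q*(abs b)*|L n| := by
        rw [abs_mul, abs_mul, abs_of_pos hq0]
      have h6 : |q*E n| ≤ q*c := by
        rw [abs_mul, abs_of_pos hq0]
        exact mul_le_mul_of_nonneg_left (le_trans hEn (div_le_self hc0 hn1)) hq0.le
      linarith
    have h7 : q*(abs b)*|L n| ≤ q*(abs b)*(Real.log n + C2) :=
      mul_le_mul_of_nonneg_left hLabs (by positivity)
    have hC4log : C4*Real.log n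
        = q*(|2*π/3 - ψ|)*Real.log n + q*c*Real.log n + q*(abs b)*Real.log n
          + q*(abs b)*C2*Real.log n + Real.log n := by
      rw [hC4def]; ring
    have e1 : q*|2*π/3 - ψ| ≤ q*(|2*π/3 - ψ|)*Real.log n :=
      le_mul_of_one_le_right (by positivity) hlog1
    have e2 : q*c ≤ q*c*Real.log n := le_mul_of_one_le_right (by positivity) hlog1
    have e3 : q*(abs b)*C2 ≤ q*(abs b)*C2*Real.log n := le_mul_of_one_le_right (by positivity) hlog1
    have e4 : q*(abs b)*Real.log n ≤ q*(abs b)*Real.log n := le_refl _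
    linarith
  obtain ⟨C5, hC5def⟩ : ∃ x : ℝ, x = 2*q*(abs b)*C4/K + q*c := ⟨_, rfl⟩
  have hC5pos : 0 ≤ C5 := by rw [hC5def]; positivity
  have S3 : ∀ᶠ n : ℕ in atTop,
      |t n - K*n - q*(b*Real.log n + b*Real.log (12*π) - ψ + 2*π/3)|
        ≤ C5 * Real.log n / n := by
    filter_upwards [S2, hcE, eventually_ge_atTop 3, hl4 (K/(2*C4)) (by positivity)]
      with n hS2 hEn hn3 hsm
    have hn0 : (3:ℝ) ≤ n := by exact_mod_cast hn3
    have hnpos : (0:ℝ) < n := by linarith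
    have hn1 : (1:ℝ) ≤ n := by linarith
    have hlog1 : 1 ≤ Real.log n := by
      rw [Real.le_log_iff_exp_le hnpos]
      have h := Real.exp_one_lt_d9
      linarith
    have hKn0 : (0:ℝ) < K*n := by positivity
    obtain ⟨r, hrdef⟩ : ∃ x : ℝ, x = t n / (K*n) := ⟨_, rfl⟩
    have htr : t n = (K*n)*r := by rw [hrdef]; field_simp
    have hsmall : C4 * Real.log n ≤ K*n/2 := by
      have h := mul_le_mul_of_nonneg_left hsm hC4pos.le
      have e : C4*(K/(2*C4)*n) = K*n/2 := by field_simp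
      linarith [e ▸ h]
    have hr1 : |r - 1| ≤ C4*Real.log n/(K*n) := by
      have h1 : r - 1 = (t n - K*n)/(K*n) := by rw [hrdef]; field_simp
      rw [h1, abs_div, abs_of_pos hKn0]
      gcongr
    have hrhalf : 1/2 ≤ r := by
      have h2 : C4*Real.log n/(K*n) ≤ 1/2 := by
        rw [div_le_iff₀ hKn0]; linarith
      have h3 := abs_le.mp hr1
      linarith
    have hr0 : 0 < r := by linarith
    have hlogr : |Real.log r| ≤ 2*(C4*Real.log n/(K*n)) := by
      have h4 := hl2 r hrhalf
      linarith [hr1]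
    have h2qK : 2*q*K = 12*π := by rw [hKdef]; linear_combination (4*π)*hq2
    have hLsplit : L n = Real.log (12*π) + Real.log n + Real.log r := by
      simp only [hLdef]
      have he : 2*q*t n = (12*π)*((n:ℝ)*r) := by rw [htr]; linear_combination ((n:ℝ)*r)*h2qK
      rw [he, Real.log_mul (by positivity) (by positivity),
        Real.log_mul (by positivity) (ne_of_gt hr0)]
      ring
    have heq : t n - K*n - q*(b*Real.log n + b*Real.log (12*π) - ψ + 2*π/3)
        = q*b*Real.log r + q*E n := by
      rw [key n, hLsplit]; ring
    rw [heq]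
    have h8 : |q*b*Real.log r + q*E n| ≤ q*(abs b)*(2*(C4*Real.log n/(K*n))) + q*(c/n) := by
      have t1 := abs_add_le (q*b*Real.log r) (q*E n)
      have t2 : |q*b*Real.log r| = q*(abs b)*|Real.log r| := by
        rw [abs_mul, abs_mul, abs_of_pos hq0]
      have t3 : |q*E n| ≤ q*(c/n) := by
        rw [abs_mul, abs_of_pos hq0]; exact mul_le_mul_of_nonneg_left hEn hq0.le
      have t4 : q*(abs b)*|Real.log r| ≤ q*(abs b)*(2*(C4*Real.log n/(K*n))) :=
        mul_le_mul_of_nonneg_left hlogr (by positivity)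
      linarith
    have h9 : q*(abs b)*(2*(C4*Real.log n/(K*n))) = (2*q*(abs b)*C4/K)*(Real.log n/n) := by
      field_simp
    have h10 : q*(c/n) ≤ (q*c)*(Real.log n/n) := by
      have he2 : (q*c)*(Real.log n/n) = (q*(c/n))*Real.log n := by field_simp
      rw [he2]
      exact le_mul_of_one_le_right (by positivity) hlog1
    have h11 : C5*Real.log n/n = (2*q*(abs b)*C4/K)*(Real.log n/n) + (q*c)*(Real.log n/n) := by
      rw [hC5def]; field_simp
    linarith
  obtain ⟨SK, hSKdef⟩ : ∃ x : ℝ, x = Real.sqrt K := ⟨_, rfl⟩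
  have hSK0 : 0 < SK := hSKdef ▸ Real.sqrt_pos.mpr hK0
  have hSK2 : SK^2 = K := hSKdef ▸ Real.sq_sqrt hK0.le
  have h14 : ((3:ℝ))^((1:ℝ)/4) = Real.sqrt (Real.sqrt 3) := by
    rw [Real.sqrt_eq_rpow, Real.sqrt_eq_rpow, ← Real.rpow_mul (by norm_num : (0:ℝ) ≤ 3)]
    norm_num
  have hA : SK = Real.sqrt (2*π) * (3:ℝ)^((1:ℝ)/4) := by
    rw [h14, hSKdef, hKdef, show 2*q*π = (2*π)*q by ring,
      Real.sqrt_mul (by positivity : (0:ℝ) ≤ 2*π), hqdef]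
  have hq_eq : q = SK^2/(2*π) := by
    rw [hSK2, hKdef]; field_simp
  obtain ⟨C, hCdef⟩ : ∃ x : ℝ, x = C5/(2*SK) + SK*C4^2/K^2 + 1 := ⟨_, rfl⟩
  rw [Asymptotics.isBigO_iff]
  refine ⟨C, ?_⟩
  filter_upwards [S2, S3, eventually_ge_atTop 3, hl4 (K/(2*C4)) (by positivity)]
    with n hS2 hS3 hn3 hsm
  have hn0 : (3:ℝ) ≤ n := by exact_mod_cast hn3
  have hnpos : (0:ℝ) < n := by linarith
  have hlog1 : 1 ≤ Real.log n := by
    rw [Real.le_log_iff_exp_le hnpos]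
    have h := Real.exp_one_lt_d9
    linarith
  have hKn0 : (0:ℝ) < K*n := by positivity
  obtain ⟨SN, hSNdef⟩ : ∃ x : ℝ, x = Real.sqrt n := ⟨_, rfl⟩
  have hSN0 : 0 < SN := hSNdef ▸ Real.sqrt_pos.mpr hnpos
  have hSN2 : SN^2 = n := hSNdef ▸ Real.sq_sqrt hnpos.le
  obtain ⟨sv, hsdef⟩ : ∃ x : ℝ, x = (t n - K*n)/(K*n) := ⟨_, rfl⟩
  have hs_bound : |sv| ≤ C4*Real.log n/(K*n) := by
    rw [hsdef, abs_div, abs_of_pos hKn0]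
    gcongr
  have hsmall : C4 * Real.log n ≤ K*n/2 := by
    have h := mul_le_mul_of_nonneg_left hsm hC4pos.le
    have e : C4*(K/(2*C4)*n) = K*n/2 := by field_simp
    linarith [e ▸ h]
  have hs_half : |sv| ≤ 1/2 := by
    have h2 : C4*Real.log n/(K*n) ≤ 1/2 := by
      rw [div_le_iff₀ hKn0]; linarith
    linarith
  have hteq : t n = (K*n)*(1+sv) := by rw [hsdef]; field_simp; ring
  have hsqrt_t : Real.sqrt (t n) = (SK*SN) * Real.sqrt (1+sv) := by
    rw [hteq, show K*(n:ℝ) = SK^2*SN^2 by rw [hSK2, hSN2],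
      show SK^2*SN^2*(1+sv) = (SK*SN)^2*(1+sv) by ring,
      Real.sqrt_mul (by positivity), Real.sqrt_sq (by positivity)]
  have ha : a n = -Real.sqrt (t n) := by
    have h := Real.sqrt_sq_eq_abs (a n)
    have h2 : t n = (a n)^2 := by rw [htdef]
    rw [h2, h, abs_of_neg (hneg n)]; ring
  obtain ⟨u, hudef⟩ : ∃ x : ℝ, x = Real.sqrt (1+sv) - (1+sv/2) := ⟨_, rfl⟩
  have hu : |u| ≤ sv^2 := hudef ▸ hl3 sv hs_half
  have han : a n = -(SK*SN*(1+sv/2+u)) := by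
    rw [ha, hsqrt_t, show Real.sqrt (1+sv) = 1+sv/2+u by rw [hudef]; ring]
  obtain ⟨δ, hδdef⟩ : ∃ x : ℝ,
      x = t n - K*n - q*(b*Real.log n + b*Real.log (12*π) - ψ + 2*π/3) := ⟨_, rfl⟩
  have hδb : |δ| ≤ C5*Real.log n/n := hδdef ▸ hS3
  have hmain : a n -
      (-(Real.sqrt (2 * π) * (3 : ℝ) ^ ((1 : ℝ)/4)) *
        (Real.sqrt n + b * Real.log n / (4 * π * Real.sqrt n) +
          (b * Real.log (12 * π) - ψ + 2 * π / 3) /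
            (4 * π * Real.sqrt n)))
      = -(δ/(2*SK*SN)) - SK*SN*u := by
    rw [← hA, ← hSNdef, han, hδdef, hsdef, hq_eq]
    rw [show ((n:ℝ)) = SN^2 from hSN2.symm, show K = SK^2 from hSK2.symm]
    field_simp
    ring
  rw [Real.norm_eq_abs, Real.norm_eq_abs, hmain]
  have hn32 : (n:ℝ)^((3:ℝ)/2) = SN^2*SN := by
    rw [show (3:ℝ)/2 = 1 + 1/2 by norm_num, Real.rpow_add hnpos, Real.rpow_one,
      ← Real.sqrt_eq_rpow, ← hSNdef, show ((n:ℝ)) = SN^2 from hSN2.symm]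
  rw [hn32]
  have hRHS0 : (0:ℝ) ≤ (Real.log n)^2/(SN^2*SN) := by positivity
  rw [abs_of_nonneg hRHS0]
  have htri : |(-(δ/(2*SK*SN)) - SK*SN*u)| ≤ |δ|/(2*SK*SN) + SK*SN*sv^2 := by
    have h1 : |(-(δ/(2*SK*SN)) - SK*SN*u)| ≤ |δ/(2*SK*SN)| + |SK*SN*u| := by
      rw [sub_eq_add_neg]
      refine (abs_add_le _ _).trans ?_
      rw [abs_neg, abs_neg]
    have h2 : |δ/(2*SK*SN)| = |δ|/(2*SK*SN) := by
      rw [abs_div, abs_of_pos (show (0:ℝ) < 2*SK*SN by positivity)]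
    have h3 : |SK*SN*u| ≤ SK*SN*sv^2 := by
      rw [abs_mul, abs_mul, abs_of_pos hSK0, abs_of_pos hSN0]
      exact mul_le_mul_of_nonneg_left hu (mul_pos hSK0 hSN0).le
    linarith
  have step2 : |δ|/(2*SK*SN) ≤ (C5/(2*SK))*((Real.log n)^2/(SN^2*SN)) := by
    rw [div_le_iff₀ (by positivity : (0:ℝ) < 2*SK*SN)]
    have e : (C5/(2*SK))*((Real.log n)^2/(SN^2*SN))*(2*SK*SN) = C5*(Real.log n)^2/SN^2 := by
      field_simp
    rw [e]
    have h1 : |δ| ≤ C5*Real.log n/SN^2 := by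
      rw [show SN^2 = ((n:ℝ)) from hSN2]; exact hδb
    have h2 : C5*Real.log n/SN^2 ≤ C5*(Real.log n)^2/SN^2 := by
      have h0 : (0:ℝ) ≤ Real.log n := by linarith
      have hmm : C5*Real.log n*1 ≤ C5*Real.log n*Real.log n :=
        mul_le_mul_of_nonneg_left hlog1 (mul_nonneg hC5pos h0)
      gcongr
      linarith [mul_le_mul_of_nonneg_right hlog1 h0]
    linarith
  have step3 : SK*SN*sv^2 ≤ (SK*C4^2/K^2)*((Real.log n)^2/(SN^2*SN)) := by
    have h1 : sv^2 ≤ (C4*Real.log n/(K*SN^2))^2 := by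
      rw [← sq_abs sv]
      have hb2 : |sv| ≤ C4*Real.log n/(K*SN^2) := by
        rw [show SN^2 = ((n:ℝ)) from hSN2]; exact hs_bound
      exact pow_le_pow_left₀ (abs_nonneg sv) hb2 2
    have h2 : SK*SN*((C4*Real.log n/(K*SN^2))^2) = (SK*C4^2/K^2)*((Real.log n)^2/(SN^2*SN)) := by
      field_simp
    calc SK*SN*sv^2 ≤ SK*SN*((C4*Real.log n/(K*SN^2))^2) :=
          mul_le_mul_of_nonneg_left h1 (by positivity)
      _ = _ := h2
  have hCX : C*((Real.log n)^2/(SN^2*SN))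
      = (C5/(2*SK))*((Real.log n)^2/(SN^2*SN))
        + (SK*C4^2/K^2)*((Real.log n)^2/(SN^2*SN))
        + (Real.log n)^2/(SN^2*SN) := by
    rw [hCdef]; ring
  linarith
end
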